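/- With the same data as the one-soliton construction, define g₂ = r e^{iφ}(1 + a b e^{η₁+conj η₁}) with φ = p x - ((μ+λ)/p) t + φ₀ and b = ((k₁-ip)(conj k₁ - ip))/((k₁+ip)(conj k₁ + ip)). Then D_x D_t (g₂·f) = (μ+λ) g₂ f holds identically, where f = 1 + a e^{η₁+conj η₁}. -/

import Mathlib

/-- The Hirota bilinear operator `D_x D_t (g·f) = g_{xt} f - g_x f_t - g_t f_x + g f_{xt}`. -/
noncomputable def hirotaDxDt (g f : ℝ → ℝ → ℂ) (x t : ℝ) : ℂ :=
  deriv (fun x' => deriv (fun t' => g x' t') t) x * f x t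
  - deriv (fun x' => g x' t) x * deriv (fun t' => f x t') t
  - deriv (fun t' => g x t') t * deriv (fun x' => f x' t) x
  + g x t * deriv (fun x' => deriv (fun t' => f x' t') t) x

private lemma hde (A B : ℂ) (x : ℝ) :
    HasDerivAt (fun y : ℝ => Complex.exp (A * ↑y + B)) (A * Complex.exp (A * ↑x + B)) x := by
  have h : HasDerivAt (fun y : ℝ => A * (y : ℂ) + B) A x := by
    simpa using (Complex.ofRealCLM.hasDerivAt.const_mul A).add_const B
  simpa [mul_comm] using h.cexp

private lemma deriv_const_add_exp (c₀ cc A B : ℂ) (x : ℝ) :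
    deriv (fun y : ℝ => c₀ + cc * Complex.exp (A * ↑y + B)) x
      = cc * A * Complex.exp (A * ↑x + B) := by
  simpa [mul_assoc] using (((hde A B x).const_mul cc).const_add c₀).deriv

private lemma deriv_exp_add_exp (c₁ c₂ A₁ B₁ A₂ B₂ : ℂ) (x : ℝ) :
    deriv (fun y : ℝ => c₁ * Complex.exp (A₁ * ↑y + B₁) + c₂ * Complex.exp (A₂ * ↑y + B₂)) x
      = c₁ * A₁ * Complex.exp (A₁ * ↑x + B₁) + c₂ * A₂ * Complex.exp (A₂ * ↑x + B₂) := by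
  simpa [mul_assoc, Pi.add_def] using
    (((hde A₁ B₁ x).const_mul c₁).add ((hde A₂ B₂ x).const_mul c₂)).deriv

private lemma key_identity (k kc u M : ℂ) (hk : k ≠ 0) (hkc : kc ≠ 0) (hu : u ≠ 0)
    (h1 : k + u ≠ 0) (h2 : kc + u ≠ 0) :
    ((k - u) * (kc - u) / ((k + u) * (kc + u)))
        * (u * (M / k + M / kc) + (M / u) * (k + kc) + (k + kc) * (M / k + M / kc))
      = u * (M / k + M / kc) + (M / u) * (k + kc) - (k + kc) * (M / k + M / kc) := by
  rw [div_mul_eq_mul_div, div_eq_iff (mul_ne_zero h1 h2)]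
  field_simp
  ring

private lemma bilinear_abstract (K L c P Q R a b r m : ℂ) (g f : ℝ → ℝ → ℂ)
    (hPQ : P * Q = m)
    (hkey : b * (P * L + Q * K + K * L) = P * L + Q * K - K * L)
    (hg : ∀ x t : ℝ, g x t = r * Complex.exp (P * ↑x + (Q * ↑t + R))
        + r * a * b * Complex.exp ((P + K) * ↑x + ((Q + L) * ↑t + (R + c))))
    (hf : ∀ x t : ℝ, f x t = 1 + a * Complex.exp (K * ↑x + (L * ↑t + c))) :
    ∀ x t : ℝ, hirotaDxDt g f x t = m * g x t * f x t := by
  intro x t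
  have ht_f : ∀ x' : ℝ, deriv (fun t' => f x' t') t
      = a * L * Complex.exp (K * ↑x' + (L * ↑t + c)) := by
    intro x'
    rw [show (fun t' : ℝ => f x' t')
        = fun t' : ℝ => 1 + a * Complex.exp (L * ↑t' + (K * ↑x' + c)) from
      funext fun t' => by rw [hf x' t',
        show K * (x' : ℂ) + (L * (t' : ℂ) + c) = L * ↑t' + (K * ↑x' + c) from by ring],
      deriv_const_add_exp,
      show L * (t : ℂ) + (K * (x' : ℂ) + c) = K * ↑x' + (L * ↑t + c) from by ring]
  have hfx : deriv (fun x' => f x' t) x = a * K * Complex.exp (K * ↑x + (L * ↑t + c)) := by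
    rw [show (fun x' : ℝ => f x' t)
        = fun x' : ℝ => 1 + a * Complex.exp (K * ↑x' + (L * ↑t + c)) from
      funext fun x' => hf x' t, deriv_const_add_exp]
  have hfxt : deriv (fun x' => deriv (fun t' => f x' t') t) x
      = a * L * K * Complex.exp (K * ↑x + (L * ↑t + c)) := by
    rw [show (fun x' : ℝ => deriv (fun t' => f x' t') t)
        = fun x' : ℝ => 0 + (a * L) * Complex.exp (K * ↑x' + (L * ↑t + c)) from
      funext fun x' => by rw [ht_f x']; ring, deriv_const_add_exp]
  have ht_g : ∀ x' : ℝ, deriv (fun t' => g x' t') t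
      = r * Q * Complex.exp (P * ↑x' + (Q * ↑t + R))
        + r * a * b * (Q + L) * Complex.exp ((P + K) * ↑x' + ((Q + L) * ↑t + (R + c))) := by
    intro x'
    rw [show (fun t' : ℝ => g x' t')
        = fun t' : ℝ => r * Complex.exp (Q * ↑t' + (P * ↑x' + R))
          + (r * a * b) * Complex.exp ((Q + L) * ↑t' + ((P + K) * ↑x' + (R + c))) from
      funext fun t' => by rw [hg x' t',
        show P * (x' : ℂ) + (Q * (t' : ℂ) + R) = Q * ↑t' + (P * ↑x' + R) from by ring,
        show (P + K) * (x' : ℂ) + ((Q + L) * (t' : ℂ) + (R + c))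
          = (Q + L) * ↑t' + ((P + K) * ↑x' + (R + c)) from by ring],
      deriv_exp_add_exp,
      show Q * (t : ℂ) + (P * (x' : ℂ) + R) = P * ↑x' + (Q * ↑t + R) from by ring,
      show (Q + L) * (t : ℂ) + ((P + K) * (x' : ℂ) + (R + c))
        = (P + K) * ↑x' + ((Q + L) * ↑t + (R + c)) from by ring]
  have hgx : deriv (fun x' => g x' t) x
      = r * P * Complex.exp (P * ↑x + (Q * ↑t + R))
        + r * a * b * (P + K) * Complex.exp ((P + K) * ↑x + ((Q + L) * ↑t + (R + c))) := by
    rw [show (fun x' : ℝ => g x' t)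
        = fun x' : ℝ => r * Complex.exp (P * ↑x' + (Q * ↑t + R))
          + (r * a * b) * Complex.exp ((P + K) * ↑x' + ((Q + L) * ↑t + (R + c))) from
      funext fun x' => hg x' t, deriv_exp_add_exp]
  have hgxt : deriv (fun x' => deriv (fun t' => g x' t') t) x
      = r * Q * P * Complex.exp (P * ↑x + (Q * ↑t + R))
        + r * a * b * (Q + L) * (P + K)
          * Complex.exp ((P + K) * ↑x + ((Q + L) * ↑t + (R + c))) := by
    rw [show (fun x' : ℝ => deriv (fun t' => g x' t') t)
        = fun x' : ℝ => (r * Q) * Complex.exp (P * ↑x' + (Q * ↑t + R))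
          + (r * a * b * (Q + L)) * Complex.exp ((P + K) * ↑x' + ((Q + L) * ↑t + (R + c))) from
      funext fun x' => ht_g x', deriv_exp_add_exp]
  have hE3 : Complex.exp ((P + K) * ↑x + ((Q + L) * ↑t + (R + c)))
      = Complex.exp (P * ↑x + (Q * ↑t + R)) * Complex.exp (K * ↑x + (L * ↑t + c)) := by
    rw [← Complex.exp_add]; congr 1; ring
  rw [hirotaDxDt, hgxt, hgx, ht_g x, hfxt, hfx, ht_f x, hg x t, hf x t, hE3]
  linear_combination
    ((r * Complex.exp (P * ↑x + (Q * ↑t + R))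
        + r * a * b * Complex.exp (P * ↑x + (Q * ↑t + R)) * Complex.exp (K * ↑x + (L * ↑t + c)))
      * (1 + a * Complex.exp (K * ↑x + (L * ↑t + c)))) * hPQ
    + (r * Complex.exp (P * ↑x + (Q * ↑t + R)) * a * Complex.exp (K * ↑x + (L * ↑t + c))) * hkey

/-- One-soliton verification of the dark-component bilinear equation:
with `g₂ = r e^{iφ}(1 + a b e^{η₁+conj η₁})`, `φ = p x - ((μ+λ)/p) t + φ₀`,
`b = ((k₁-ip)(conj k₁ - ip))/((k₁+ip)(conj k₁ + ip))`, `f = 1 + a e^{η₁+conj η₁}`,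
one has `D_x D_t (g₂·f) = (μ+λ) g₂ f`. -/
theorem stmt5 (k₁ η₁₀ : ℂ) (p r σ μ lam φ₀ : ℝ)
    (hk : k₁.re ≠ 0) (hml : μ + lam ≠ 0) (hp : p ≠ 0)
    (hpk : (p : ℂ) ^ 2 + k₁ ^ 2 ≠ 0)
    (C : ℝ) (hC : C = 2 / σ + 4 * p ^ 2 * r ^ 2 / ‖(p : ℂ) ^ 2 + k₁ ^ 2‖ ^ 2)
    (hCpos : 0 < C)
    (a : ℂ) (ha : a = 1 / ((k₁ + (starRingEnd ℂ) k₁) ^ 2 * (C : ℂ)))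
    (b : ℂ) (hb : b = ((k₁ - Complex.I * p) * ((starRingEnd ℂ) k₁ - Complex.I * p)) /
      ((k₁ + Complex.I * p) * ((starRingEnd ℂ) k₁ + Complex.I * p)))
    (η₁ : ℝ → ℝ → ℂ)
    (hη : ∀ x t : ℝ, η₁ x t = k₁ * x + (((μ + lam : ℝ) : ℂ) / k₁) * t + η₁₀)
    (φ : ℝ → ℝ → ℝ)
    (hφ : ∀ x t : ℝ, φ x t = p * x - ((μ + lam) / p) * t + φ₀)
    (g₂ f : ℝ → ℝ → ℂ)
    (hg₂ : ∀ x t : ℝ, g₂ x t = (r : ℂ) * Complex.exp (Complex.I * (φ x t : ℂ)) *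
      (1 + a * b * Complex.exp (η₁ x t + (starRingEnd ℂ) (η₁ x t))))
    (hf : ∀ x t : ℝ, f x t = 1 + a * Complex.exp (η₁ x t + (starRingEnd ℂ) (η₁ x t))) :
    ∀ x t : ℝ, hirotaDxDt g₂ f x t = ((μ + lam : ℝ) : ℂ) * g₂ x t * f x t := by
  have hk1 : k₁ ≠ 0 := fun h => hk (by simp [h])
  have hk1c : (starRingEnd ℂ) k₁ ≠ 0 := by
    rw [starRingEnd_apply]; exact star_ne_zero.mpr hk1
  have hpc : (p : ℂ) ≠ 0 := Complex.ofReal_ne_zero.mpr hp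
  have hu0 : Complex.I * (p : ℂ) ≠ 0 := mul_ne_zero Complex.I_ne_zero hpc
  have hfac : (p : ℂ) ^ 2 + k₁ ^ 2 = (k₁ + Complex.I * ↑p) * (k₁ - Complex.I * ↑p) := by
    linear_combination ((p : ℂ) ^ 2) * Complex.I_sq
  have hd1 : k₁ + Complex.I * (p : ℂ) ≠ 0 := by
    intro h; exact hpk (by rw [hfac, h, zero_mul])
  have hd1m : k₁ - Complex.I * (p : ℂ) ≠ 0 := by
    intro h; exact hpk (by rw [hfac, h, mul_zero])
  have hd2 : (starRingEnd ℂ) k₁ + Complex.I * (p : ℂ) ≠ 0 := by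
    have hconj : (starRingEnd ℂ) (k₁ - Complex.I * ↑p)
        = (starRingEnd ℂ) k₁ + Complex.I * ↑p := by
      simp [map_sub, map_mul, Complex.conj_ofReal, Complex.conj_I]
    rw [← hconj, starRingEnd_apply]
    exact star_ne_zero.mpr hd1m
  have hηsum : ∀ x t : ℝ, η₁ x t + (starRingEnd ℂ) (η₁ x t)
      = (k₁ + (starRingEnd ℂ) k₁) * ↑x
        + ((((μ + lam : ℝ) : ℂ) / k₁ + ((μ + lam : ℝ) : ℂ) / (starRingEnd ℂ) k₁) * ↑t
          + (η₁₀ + (starRingEnd ℂ) η₁₀)) := by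
    intro x t
    rw [hη]
    simp only [map_add, map_mul, map_div₀, Complex.conj_ofReal]
    ring
  have hphase : ∀ x t : ℝ, Complex.I * ((φ x t : ℝ) : ℂ)
      = Complex.I * ↑p * ↑x
        + ((((μ + lam : ℝ) : ℂ) / (Complex.I * ↑p)) * ↑t + Complex.I * ↑φ₀) := by
    intro x t
    have hq : (((μ + lam : ℝ) : ℂ)) / (Complex.I * ↑p)
        = -Complex.I * (((μ + lam : ℝ) : ℂ)) / ↑p := by
      rw [mul_comm, ← div_div, Complex.div_I]; ring
    rw [hφ, hq]
    push_cast
    ring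
  have hPQ : (Complex.I * (p : ℂ)) * (((μ + lam : ℝ) : ℂ) / (Complex.I * ↑p))
      = ((μ + lam : ℝ) : ℂ) := mul_div_cancel₀ _ hu0
  have hkey := key_identity k₁ ((starRingEnd ℂ) k₁) (Complex.I * ↑p) ((μ + lam : ℝ) : ℂ)
    hk1 hk1c hu0 hd1 hd2
  rw [← hb] at hkey
  have hg' : ∀ x t : ℝ, g₂ x t
      = (r : ℂ) * Complex.exp (Complex.I * ↑p * ↑x
          + ((((μ + lam : ℝ) : ℂ) / (Complex.I * ↑p)) * ↑t + Complex.I * ↑φ₀))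
        + (r : ℂ) * a * b * Complex.exp ((Complex.I * ↑p + (k₁ + (starRingEnd ℂ) k₁)) * ↑x
          + (((((μ + lam : ℝ) : ℂ) / (Complex.I * ↑p))
              + (((μ + lam : ℝ) : ℂ) / k₁ + ((μ + lam : ℝ) : ℂ) / (starRingEnd ℂ) k₁)) * ↑t
            + (Complex.I * ↑φ₀ + (η₁₀ + (starRingEnd ℂ) η₁₀)))) := by
    intro x t
    have hsplit : Complex.exp ((Complex.I * ↑p + (k₁ + (starRingEnd ℂ) k₁)) * (x : ℂ)
          + (((((μ + lam : ℝ) : ℂ) / (Complex.I * ↑p))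
              + (((μ + lam : ℝ) : ℂ) / k₁ + ((μ + lam : ℝ) : ℂ) / (starRingEnd ℂ) k₁)) * (t : ℂ)
            + (Complex.I * ↑φ₀ + (η₁₀ + (starRingEnd ℂ) η₁₀))))
        = Complex.exp (Complex.I * ↑p * ↑x
            + ((((μ + lam : ℝ) : ℂ) / (Complex.I * ↑p)) * ↑t + Complex.I * ↑φ₀))
          * Complex.exp ((k₁ + (starRingEnd ℂ) k₁) * ↑x
            + ((((μ + lam : ℝ) : ℂ) / k₁ + ((μ + lam : ℝ) : ℂ) / (starRingEnd ℂ) k₁) * ↑t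
              + (η₁₀ + (starRingEnd ℂ) η₁₀))) := by
      rw [← Complex.exp_add]; congr 1; ring
    rw [hg₂ x t, hphase x t, hηsum x t, hsplit]
    ring
  have hf' : ∀ x t : ℝ, f x t
      = 1 + a * Complex.exp ((k₁ + (starRingEnd ℂ) k₁) * ↑x
        + ((((μ + lam : ℝ) : ℂ) / k₁ + ((μ + lam : ℝ) : ℂ) / (starRingEnd ℂ) k₁) * ↑t
          + (η₁₀ + (starRingEnd ℂ) η₁₀))) := by
    intro x t
    rw [hf x t, hηsum x t]
  exact bilinear_abstract (k₁ + (starRingEnd ℂ) k₁)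
    (((μ + lam : ℝ) : ℂ) / k₁ + ((μ + lam : ℝ) : ℂ) / (starRingEnd ℂ) k₁)
    (η₁₀ + (starRingEnd ℂ) η₁₀) (Complex.I * ↑p)
    (((μ + lam : ℝ) : ℂ) / (Complex.I * ↑p)) (Complex.I * ↑φ₀) a b (r : ℂ)
    ((μ + lam : ℝ) : ℂ) g₂ f hPQ hkey hg' hf'
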